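/- (Functional skeleton of: bIC + 1-pbIC implies zero platform revenue over a continuous value domain, ex post setting.) Let n ≥ 1 be a natural number. Let x, p : (Fin n → [0,∞)) → (Fin n → ℝ) and μ : (Fin n → [0,∞)) → ℝ. Assume: (a) for every bid vector b and every i, 0 ≤ x(b)(i) ≤ 1; (b) monotone allocation: for every b, every i, and every 0 ≤ u ≤ u', x(b[i ↦ u'])(i) ≥ x(b[i ↦ u])(i); (c) payment sandwich: for every b, every i, and every 0 ≤ u < u', u·(x(b[i ↦ u'])(i) − x(b[i ↦ u])(i)) ≤ p(b[i ↦ u'])(i) − p(b[i ↦ u])(i) ≤ u'·(x(b[i ↦ u'])(i) − x(b[i ↦ u])(i)); (d) collusion inequality: for every b, every i, and every u, u' ≥ 0, μ(b[i ↦ u']) − μ(b[i ↦ u]) ≤ (p(b[i ↦ u'])(i) − p(b[i ↦ u])(i)) − u·(x(b[i ↦ u'])(i) − x(b[i ↦ u])(i)); (e) μ(b) ≥ 0 for every b; and (f) μ of the all-zero bid vector is at most 0. Then μ(b) = 0 for every bid vector b : Fin n → [0,∞). -/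

import Mathlib

/-- bIC + 1-pbIC implies zero platform revenue over a
continuous value domain (ex post setting, functional skeleton). -/
theorem platform_revenue_zero_continuous
    (n : ℕ) (hn : 1 ≤ n)
    (x p : (Fin n → ℝ) → Fin n → ℝ) (μ : (Fin n → ℝ) → ℝ)
    (ha : ∀ b : Fin n → ℝ, (∀ i, 0 ≤ b i) → ∀ i, 0 ≤ x b i ∧ x b i ≤ 1)
    (hb : ∀ b : Fin n → ℝ, (∀ i, 0 ≤ b i) → ∀ i : Fin n, ∀ u u' : ℝ,
      0 ≤ u → u ≤ u' → x (Function.update b i u') i ≥ x (Function.update b i u) i)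
    (hc : ∀ b : Fin n → ℝ, (∀ i, 0 ≤ b i) → ∀ i : Fin n, ∀ u u' : ℝ,
      0 ≤ u → u < u' →
      u * (x (Function.update b i u') i - x (Function.update b i u) i) ≤
        p (Function.update b i u') i - p (Function.update b i u) i ∧
      p (Function.update b i u') i - p (Function.update b i u) i ≤
        u' * (x (Function.update b i u') i - x (Function.update b i u) i))
    (hd : ∀ b : Fin n → ℝ, (∀ i, 0 ≤ b i) → ∀ i : Fin n, ∀ u u' : ℝ,
      0 ≤ u → 0 ≤ u' →
      μ (Function.update b i u') - μ (Function.update b i u) ≤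
        (p (Function.update b i u') i - p (Function.update b i u) i) -
          u * (x (Function.update b i u') i - x (Function.update b i u) i))
    (he : ∀ b : Fin n → ℝ, (∀ i, 0 ≤ b i) → 0 ≤ μ b)
    (hf : μ (fun _ => 0) ≤ 0) :
    ∀ b : Fin n → ℝ, (∀ i, 0 ≤ b i) → μ b = 0 := by
  -- Key lemma: zeroing out one coordinate does not decrease μ.
  have key : ∀ b : Fin n → ℝ, (∀ i, 0 ≤ b i) → ∀ i : Fin n,
      μ b ≤ μ (Function.update b i 0) := by
    intro b hbpos i
    have hc0 : 0 ≤ b i := hbpos i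
    rcases eq_or_lt_of_le hc0 with hc0' | hcpos
    · have : Function.update b i 0 = b := by
        rw [hc0']; exact Function.update_eq_self i b
      rw [this]
    set c := b i with hcdef
    -- positive case: show μ b ≤ μ (update b i 0) + ε for all ε > 0
    apply le_of_forall_pos_le_add
    intro ε hε
    obtain ⟨m, hm⟩ := exists_nat_gt (c / ε)
    have hm0 : 0 < (m : ℝ) := lt_trans (div_pos hcpos hε) hm
    have hcm : c / m ≤ ε := by
      rw [div_le_iff₀ hm0]
      have : c = (c / ε) * ε := by field_simp
      nlinarith
    set u : ℕ → ℝ := fun k => (k : ℝ) * (c / m) with hudef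
    have hupos : ∀ k : ℕ, 0 ≤ u k := by
      intro k
      have : 0 ≤ c / m := le_of_lt (div_pos hcpos hm0)
      positivity
    have hnonneg : ∀ k : ℕ, ∀ j, 0 ≤ Function.update b i (u k) j := by
      intro k j
      rcases eq_or_ne j i with rfl | hj
      · simp [hupos k]
      · simp [Function.update_of_ne hj, hbpos j]
    have hulb : ∀ k : ℕ, u k < u (k + 1) := by
      intro k
      have h1 : (k : ℝ) < (k : ℝ) + 1 := by linarith
      have h2 : 0 < c / m := div_pos hcpos hm0
      simp only [hudef, Nat.cast_add, Nat.cast_one]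
      nlinarith
    have hdiff : ∀ k : ℕ, u (k + 1) - u k = c / m := by
      intro k
      simp only [hudef, Nat.cast_add, Nat.cast_one]
      ring
    -- step bound
    have hstep : ∀ k : ℕ,
        μ (Function.update b i (u (k + 1))) - μ (Function.update b i (u k)) ≤
          (c / m) * (x (Function.update b i (u (k + 1))) i - x (Function.update b i (u k)) i) := by
      intro k
      have h1 := hd b hbpos i (u k) (u (k + 1)) (hupos k) (hupos (k + 1))
      have h2 := (hc b hbpos i (u k) (u (k + 1)) (hupos k) (hulb k)).2
      have h3 : u (k + 1) - u k = c / m := hdiff k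
      nlinarith [hb b hbpos i (u k) (u (k + 1)) (hupos k) (le_of_lt (hulb k))]
    -- telescoping
    have htel1 := Finset.sum_range_sub (fun k => μ (Function.update b i (u k))) m
    have htel2 := Finset.sum_range_sub (fun k => x (Function.update b i (u k)) i) m
    have hsum : μ (Function.update b i (u m)) - μ (Function.update b i (u 0)) ≤
        (c / m) * (x (Function.update b i (u m)) i - x (Function.update b i (u 0)) i) := by
      rw [← htel1, ← htel2, Finset.mul_sum]
      exact Finset.sum_le_sum fun k _ => hstep k
    have hum : Function.update b i (u m) = b := by
      have : u m = b i := by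
        simp only [hudef]
        field_simp
        exact hcdef
      rw [this]; exact Function.update_eq_self i b
    have hu0 : u 0 = 0 := by simp [hudef]
    rw [hum, hu0] at hsum
    have hx1 : x b i ≤ 1 := (ha b hbpos i).2
    have hx0 : 0 ≤ x (Function.update b i 0) i := by
      have := hnonneg 0
      rw [hu0] at this
      exact (ha _ this i).1
    have hcm' : 0 < c / m := div_pos hcpos hm0
    nlinarith
  -- Now zero out coordinates one at a time.
  intro b hbpos
  have hall : ∀ s : Finset (Fin n),
      μ (fun j => if j ∈ s then b j else 0) ≤ μ (fun _ => 0) := by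
    intro s
    induction s using Finset.induction_on with
    | empty => simp
    | @insert a s has ih =>
      set b1 : Fin n → ℝ := fun j => if j ∈ insert a s then b j else 0 with hb1
      have hb1pos : ∀ j, 0 ≤ b1 j := by
        intro j; simp only [hb1]
        split
        · exact hbpos j
        · exact le_refl 0
      have hupd : Function.update b1 a 0 = fun j => if j ∈ s then b j else 0 := by
        funext j
        rcases eq_or_ne j a with rfl | hj
        · simp [Function.update_self, (by simpa using has : j ∉ s)]
        · simp [Function.update_of_ne hj, hb1, Finset.mem_insert, hj]
      calc μ b1 ≤ μ (Function.update b1 a 0) := key b1 hb1pos a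
        _ ≤ μ fun _ => 0 := by rw [hupd]; exact ih
  have h1 : (fun j => if j ∈ (Finset.univ : Finset (Fin n)) then b j else 0) = b := by
    funext j; simp
  have h2 : μ b ≤ μ fun _ => 0 := by rw [← h1]; exact hall Finset.univ
  exact le_antisymm (le_trans h2 hf) (he b hbpos)
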